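/- Let G be a graph and let G' be obtained from G by adding, for each edge uv of G, a new vertex w_{uv} adjacent exactly to u and v. If F is a set of non-edges of G such that G + F contains no induced C4, then G' + F contains no induced house. -/

import Mathlib

/-- The cycle on 4 vertices. -/
def C4 : SimpleGraph (Fin 4) :=
  SimpleGraph.fromEdgeSet {s(0,1), s(1,2), s(2,3), s(3,0)}

/-- The house graph: a 4-cycle with a fifth vertex adjacent to two adjacent
cycle vertices (the complement of `P5`). -/
def house : SimpleGraph (Fin 5) :=
  SimpleGraph.fromEdgeSet {s(0,1), s(1,2), s(2,3), s(3,0), s(0,4), s(1,4)}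

/-- The graph `G'` obtained from `G` by adding, for each edge `uv` of `G`, a new
vertex `w_{uv}` adjacent exactly to `u` and `v`; the new vertices are pairwise
distinct and non-adjacent. -/
def edgeWitnessGraph {V : Type*} (G : SimpleGraph V) :
    SimpleGraph (V ⊕ {p : V × V // G.Adj p.1 p.2}) :=
  SimpleGraph.fromRel (fun x y =>
    match x, y with
    | Sum.inl a, Sum.inl b => G.Adj a b
    | Sum.inl a, Sum.inr e => a = e.1.1 ∨ a = e.1.2
    | _, _ => False)

section helpers
variable {V : Type*} (G : SimpleGraph V) (F : Set (Sym2 V))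

lemma inl_adj (a b : V) :
    (edgeWitnessGraph G ⊔ SimpleGraph.fromEdgeSet (Sym2.map Sum.inl '' F)).Adj
      (Sum.inl a) (Sum.inl b) ↔ (G ⊔ SimpleGraph.fromEdgeSet F).Adj a b := by
  simp only [SimpleGraph.sup_adj, edgeWitnessGraph, SimpleGraph.fromRel_adj,
    SimpleGraph.fromEdgeSet_adj, ne_eq, Sum.inl.injEq]
  constructor
  · rintro (⟨hne, h | h⟩ | ⟨hmem, hne⟩)
    · exact Or.inl h
    · exact Or.inl h.symm
    · obtain ⟨p, hp, heq⟩ := hmem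
      right
      refine ⟨?_, hne⟩
      have : p = s(a, b) := Sym2.map.injective Sum.inl_injective (by rw [heq]; rfl)
      rwa [this] at hp
  · rintro (h | ⟨hmem, hne⟩)
    · exact Or.inl ⟨h.ne, Or.inl h⟩
    · exact Or.inr ⟨⟨s(a,b), hmem, rfl⟩, by simpa using hne⟩

lemma inr_adj (e : {p : V × V // G.Adj p.1 p.2}) (x) :
    (edgeWitnessGraph G ⊔ SimpleGraph.fromEdgeSet (Sym2.map Sum.inl '' F)).Adj
      (Sum.inr e) x → x = Sum.inl e.1.1 ∨ x = Sum.inl e.1.2 := by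
  rintro (h | ⟨⟨p, hp, heq⟩, hne⟩)
  · rw [edgeWitnessGraph, SimpleGraph.fromRel_adj] at h
    obtain ⟨hne, h | h⟩ := h
    · cases x <;> simp_all
    · cases x with
      | inl a => rcases h with h | h <;> simp [h]
      | inr => simp_all
  · exfalso
    induction p using Sym2.ind with
    | _ u v =>
      rw [Sym2.map_pair_eq, Sym2.eq_iff] at heq
      rcases heq with ⟨h, _⟩ | ⟨_, h⟩ <;> exact absurd h (by simp)

end helpers

/-- If `F` is a set of non-edges of `G` such that `G + F` contains no induced
`C4`, then `G' + F` contains no induced house. -/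
theorem completion_house_free {V : Type*} (G : SimpleGraph V)
    (F : Set (Sym2 V)) (hF : F ⊆ Gᶜ.edgeSet)
    (hfree : IsEmpty (C4 ↪g (G ⊔ SimpleGraph.fromEdgeSet F))) :
    IsEmpty (house ↪g
      (edgeWitnessGraph G ⊔ SimpleGraph.fromEdgeSet (Sym2.map Sum.inl '' F))) := by
  constructor
  intro φ
  have hA : ∀ i j : Fin 5, house.Adj i j →
      (edgeWitnessGraph G ⊔ SimpleGraph.fromEdgeSet (Sym2.map Sum.inl '' F)).Adj (φ i) (φ j) :=
    fun i j h => φ.map_rel_iff.mpr h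
  have h01 : house.Adj 0 1 := by simp [house]
  have h12 : house.Adj 1 2 := by simp [house]
  have h23 : house.Adj 2 3 := by simp [house]
  have h03 : house.Adj 0 3 := by simp [house]
  have h04 : house.Adj 0 4 := by simp [house]
  have h14 : house.Adj 1 4 := by simp [house]
  have n13 : ¬ house.Adj 1 3 := by simp [house]
  have n02 : ¬ house.Adj 0 2 := by simp [house]
  -- φ 0 is inl
  have h0 : ∃ v, φ 0 = Sum.inl v := by
    rcases h : φ 0 with v | e
    · exact ⟨v, rfl⟩
    · exfalso
      have a1 := inr_adj G F e (φ 1) (by rw [← h]; exact hA 0 1 h01)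
      have a3 := inr_adj G F e (φ 3) (by rw [← h]; exact hA 0 3 h03)
      have a4 := inr_adj G F e (φ 4) (by rw [← h]; exact hA 0 4 h04)
      rcases a1 with a1 | a1 <;> rcases a3 with a3 | a3 <;> rcases a4 with a4 | a4 <;>
        first
          | exact absurd (φ.injective (a1.trans a3.symm)) (by decide)
          | exact absurd (φ.injective (a1.trans a4.symm)) (by decide)
          | exact absurd (φ.injective (a3.trans a4.symm)) (by decide)
  have h1 : ∃ v, φ 1 = Sum.inl v := by
    rcases h : φ 1 with v | e
    · exact ⟨v, rfl⟩
    · exfalso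
      have a0 := inr_adj G F e (φ 0) (by rw [← h]; exact (hA 0 1 h01).symm)
      have a2 := inr_adj G F e (φ 2) (by rw [← h]; exact hA 1 2 h12)
      have a4 := inr_adj G F e (φ 4) (by rw [← h]; exact hA 1 4 h14)
      rcases a0 with a0 | a0 <;> rcases a2 with a2 | a2 <;> rcases a4 with a4 | a4 <;>
        first
          | exact absurd (φ.injective (a0.trans a2.symm)) (by decide)
          | exact absurd (φ.injective (a0.trans a4.symm)) (by decide)
          | exact absurd (φ.injective (a2.trans a4.symm)) (by decide)
  have h2 : ∃ v, φ 2 = Sum.inl v := by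
    rcases h : φ 2 with v | e
    · exact ⟨v, rfl⟩
    · exfalso
      have a1 := inr_adj G F e (φ 1) (by rw [← h]; exact (hA 1 2 h12).symm)
      have a3 := inr_adj G F e (φ 3) (by rw [← h]; exact hA 2 3 h23)
      have key : (edgeWitnessGraph G ⊔
          SimpleGraph.fromEdgeSet (Sym2.map Sum.inl '' F)).Adj (φ 1) (φ 3) := by
        rcases a1 with a1 | a1 <;> rcases a3 with a3 | a3
        · exact absurd (φ.injective (a1.trans a3.symm)) (by decide)
        · rw [a1, a3]; exact (inl_adj G F _ _).mpr (Or.inl e.2)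
        · rw [a1, a3]; exact (inl_adj G F _ _).mpr (Or.inl e.2.symm)
        · exact absurd (φ.injective (a1.trans a3.symm)) (by decide)
      exact n13 (φ.map_rel_iff.mp key)
  have h3 : ∃ v, φ 3 = Sum.inl v := by
    rcases h : φ 3 with v | e
    · exact ⟨v, rfl⟩
    · exfalso
      have a0 := inr_adj G F e (φ 0) (by rw [← h]; exact (hA 0 3 h03).symm)
      have a2 := inr_adj G F e (φ 2) (by rw [← h]; exact (hA 2 3 h23).symm)
      have key : (edgeWitnessGraph G ⊔
          SimpleGraph.fromEdgeSet (Sym2.map Sum.inl '' F)).Adj (φ 0) (φ 2) := by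
        rcases a0 with a0 | a0 <;> rcases a2 with a2 | a2
        · exact absurd (φ.injective (a0.trans a2.symm)) (by decide)
        · rw [a0, a2]; exact (inl_adj G F _ _).mpr (Or.inl e.2)
        · rw [a0, a2]; exact (inl_adj G F _ _).mpr (Or.inl e.2.symm)
        · exact absurd (φ.injective (a0.trans a2.symm)) (by decide)
      exact n02 (φ.map_rel_iff.mp key)
  obtain ⟨v0, hv0⟩ := h0
  obtain ⟨v1, hv1⟩ := h1
  obtain ⟨v2, hv2⟩ := h2
  obtain ⟨v3, hv3⟩ := h3
  set f : Fin 4 → V := ![v0, v1, v2, v3] with hf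
  set g : Fin 4 → Fin 5 := ![0, 1, 2, 3] with hg
  have hφg : ∀ i : Fin 4, φ (g i) = Sum.inl (f i) := by
    intro i; fin_cases i <;> simpa [f, g]
  have hadj : ∀ i j : Fin 4,
      (G ⊔ SimpleGraph.fromEdgeSet F).Adj (f i) (f j) ↔ house.Adj (g i) (g j) := by
    intro i j
    rw [← inl_adj, ← hφg, ← hφg, φ.map_rel_iff]
  have hginj : Function.Injective g := by decide
  refine hfree.false ⟨⟨f, ?_⟩, ?_⟩
  · intro i j hij
    exact hginj (φ.injective (by rw [hφg i, hφg j, hij]))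
  · intro a b
    show (G ⊔ SimpleGraph.fromEdgeSet F).Adj (f a) (f b) ↔ C4.Adj a b
    rw [hadj]
    fin_cases a <;> fin_cases b <;> simp [house, C4, g]
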